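/- Let K, μ, ℰ, Π, φ, Θ, Σ be real numbers with K > 0 satisfying K = μ/3 - ℰ - Π/2 + φ²/4 - (Θ/3 - Σ/2)². Suppose the gradient of K is given by ∇K = -K̇ u + K̂ e with K̇ = -(2Θ/3 - Σ)K and K̂ = -φK, so that the norm is ∇K·∇K = -K̇² + K̂². Then the Misner–Sharp mass M = (1/(2√K))·(1 - (∇K·∇K)/(4K³)) equals M = (1/(2K^{3/2}))·(μ/3 - ℰ - Π/2). -/

import Mathlib

lemma aux_7 (s μ ℰ P φ Θ S : ℝ) (hs : 0 < s)
    (hK : s ^ 2 = μ / 3 - ℰ - P / 2 + φ ^ 2 / 4 - (Θ / 3 - S / 2) ^ 2) :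
    1 / (2 * s) * (1 - (-(-((2 / 3) * Θ - S) * s ^ 2) ^ 2 + (-φ * s ^ 2) ^ 2) / (4 * (s ^ 2) ^ 3))
      = 1 / (2 * s ^ 3) * (μ / 3 - ℰ - P / 2) := by
  have hne : s ≠ 0 := hs.ne'
  field_simp
  linear_combination 72 * hK

/-- The Misner–Sharp mass M = (1/(2√K))(1 - ∇K·∇K/(4K³)) equals
(1/(2K^{3/2}))(μ/3 - ℰ - P/2), given the LRS-II field equations for K.
Here S denotes the shear Σ and P the anisotropic stress Π. -/
theorem stmt_7 (K μ ℰ P φ Θ S Kdot Khat gradNorm M : ℝ)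
    (hKpos : 0 < K)
    (hK : K = μ / 3 - ℰ - P / 2 + φ ^ 2 / 4 - (Θ / 3 - S / 2) ^ 2)
    (hKdot : Kdot = -((2 / 3) * Θ - S) * K)
    (hKhat : Khat = -φ * K)
    (hgrad : gradNorm = -Kdot ^ 2 + Khat ^ 2)
    (hM : M = 1 / (2 * Real.sqrt K) * (1 - gradNorm / (4 * K ^ 3))) :
    M = 1 / (2 * Real.sqrt K ^ 3) * (μ / 3 - ℰ - P / 2) := by
  have hs : Real.sqrt K ^ 2 = K := Real.sq_sqrt hKpos.le
  have hspos : 0 < Real.sqrt K := Real.sqrt_pos.mpr hKpos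
  subst hgrad hKdot hKhat hM
  have := aux_7 (Real.sqrt K) μ ℰ P φ Θ S hspos (by rw [hs]; exact hK)
  rw [hs] at this
  exact this
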